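/- arXiv:2303.13614 — 3 statements merged into one kernel-verified Lean document; each statement's English description precedes it below -/
import Mathlib

section
/- Let R be a commutative ring, τ ∈ R, and h_1, ..., h_k ∈ R (k ≥ 2) elements satisfying h_i^2 + τ·h_i = 0 for all i, and h_i = h_j + (j - i)·τ for all i, j (equivalently h_{i+1} = h_i + τ). Then the product ∏_{i=1}^{k-1} (h_i + h_{i+1} + τ) equals ∑_{j=0}^{k-1} τ^{k-1-j} · e_j(h_1, ..., h_k), where e_j denotes the j-th elementary symmetric polynomial in k variables. -/
section Aux

variable {R : Type*} [CommRing R] (τ : R) (h : ℕ → R)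

/-- elementary symmetric polynomial `e_j (h 1, ..., h m)` -/
def Esym (m j : ℕ) : R :=
  ∑ t ∈ Finset.powersetCard j (Finset.Icc 1 m), ∏ i ∈ t, h i

def Ssum (m : ℕ) : R :=
  ∑ j ∈ Finset.range m, τ ^ (m - 1 - j) * Esym h m j

lemma Esym_zero (m : ℕ) : Esym h m 0 = 1 := by
  simp [Esym]

lemma Esym_succ (m j : ℕ) :
    Esym h (m + 1) (j + 1) = Esym h m (j + 1) + h (m + 1) * Esym h m j := by
  have hnot : (m + 1) ∉ Finset.Icc 1 m := by simp
  have hIcc : Finset.Icc 1 (m + 1) = insert (m + 1) (Finset.Icc 1 m) := by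
    ext x; simp only [Finset.mem_Icc, Finset.mem_insert]; omega
  unfold Esym
  rw [hIcc, Finset.powersetCard_succ_insert hnot, Finset.sum_union, Finset.sum_image]
  · congr 1
    rw [Finset.mul_sum]
    refine Finset.sum_congr rfl fun t ht => ?_
    have htnot : (m + 1) ∉ t := fun hc =>
      hnot ((Finset.mem_powersetCard.mp ht).1 hc)
    rw [Finset.prod_insert htnot]
  · intro a ha b hb hab
    have hanot : (m + 1) ∉ a := fun hc =>
      hnot ((Finset.mem_powersetCard.mp ha).1 hc)
    have hbnot : (m + 1) ∉ b := fun hc =>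
      hnot ((Finset.mem_powersetCard.mp hb).1 hc)
    have := congrArg (fun s => Finset.erase s (m + 1)) hab
    simpa [Finset.erase_insert, hanot, hbnot] using this
  · rw [Finset.disjoint_left]
    intro t ht ht'
    have : (m + 1) ∈ t := by
      rcases Finset.mem_image.mp ht' with ⟨u, _, rfl⟩
      exact Finset.mem_insert_self _ _
    exact hnot ((Finset.mem_powersetCard.mp ht).1 this)

lemma Esym_self (m : ℕ) : Esym h m m = ∏ i ∈ Finset.Icc 1 m, h i := by
  have hcard : (Finset.Icc 1 m).card = m := by
    rw [Nat.card_Icc]; omega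
  have hps := Finset.powersetCard_self (Finset.Icc 1 m)
  rw [hcard] at hps
  rw [Esym, hps, Finset.sum_singleton]

lemma Esym_self_eq_zero (h12 : h 1 * h 2 = 0) {m : ℕ} (hm : 2 ≤ m) :
    Esym h m m = 0 := by
  rw [Esym_self]
  have hIcc : Finset.Icc 1 m = insert 1 (insert 2 (Finset.Icc 3 m)) := by
    ext x
    simp only [Finset.mem_Icc, Finset.mem_insert]
    omega
  have h2not : (2 : ℕ) ∉ Finset.Icc 3 m := by simp
  have h1not : (1 : ℕ) ∉ insert 2 (Finset.Icc 3 m) := by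
    simp [Finset.mem_Icc]
  rw [hIcc, Finset.prod_insert h1not, Finset.prod_insert h2not, ← mul_assoc, h12,
    zero_mul]

lemma Ssum_succ (h12 : h 1 * h 2 = 0) {m : ℕ} (hm : 2 ≤ m) :
    Ssum τ h (m + 1) = (τ + h (m + 1)) * Ssum τ h m := by
  obtain ⟨n, rfl⟩ : ∃ n, m = n + 1 := ⟨m - 1, by omega⟩
  have step1 : Ssum τ h (n + 1 + 1) =
      (∑ j ∈ Finset.range (n + 1), τ ^ (n + 1 - (j + 1)) * Esym h (n + 1 + 1) (j + 1)) +
        τ ^ (n + 1 - 0) * Esym h (n + 1 + 1) 0 := by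
    rw [Ssum]
    simp only [Nat.add_sub_cancel]
    rw [Finset.sum_range_succ']
  rw [step1, Esym_zero]
  have step2 : ∀ j ∈ Finset.range (n + 1),
      τ ^ (n + 1 - (j + 1)) * Esym h (n + 1 + 1) (j + 1) =
        τ ^ (n - j) * Esym h (n + 1) (j + 1) +
          h (n + 1 + 1) * (τ ^ (n - j) * Esym h (n + 1) j) := by
    intro j hj
    rw [Esym_succ]
    have : n + 1 - (j + 1) = n - j := by omega
    rw [this]; ring
  rw [Finset.sum_congr rfl step2, Finset.sum_add_distrib, ← Finset.mul_sum]
  have hS : ∑ j ∈ Finset.range (n + 1), τ ^ (n - j) * Esym h (n + 1) j = Ssum τ h (n + 1) := by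
    rw [Ssum]; simp only [Nat.add_sub_cancel]
  rw [hS]
  -- remaining: first sum + τ^(n+1) = τ * Ssum
  have key : (∑ j ∈ Finset.range (n + 1), τ ^ (n - j) * Esym h (n + 1) (j + 1)) + τ ^ (n + 1) =
      τ * Ssum τ h (n + 1) := by
    rw [Finset.sum_range_succ, Esym_self_eq_zero h h12 hm, mul_zero, add_zero]
    rw [Ssum]
    simp only [Nat.add_sub_cancel]
    rw [Finset.mul_sum, Finset.sum_range_succ', Esym_zero]
    congr 1
    · refine Finset.sum_congr rfl fun j hj => ?_
      have hjn : j < n := Finset.mem_range.mp hj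
      have : n - j = (n - (j + 1)) + 1 := by omega
      rw [this, pow_succ]
      ring
    · rw [mul_one, ← pow_succ']
      norm_num
  have : τ ^ (n + 1 - 0) = τ ^ (n + 1) := by norm_num
  rw [this]
  linear_combination key

end Aux

theorem stmt_2 {R : Type*} [CommRing R] (k : ℕ) (hk : 2 ≤ k) (τ : R) (h : ℕ → R)
    (hsq : ∀ i, 1 ≤ i → i ≤ k → h i ^ 2 + τ * h i = 0)
    (hstep : ∀ i, 1 ≤ i → i < k → h (i + 1) = h i + τ) :
    ∏ i ∈ Finset.Icc 1 (k - 1), (h i + h (i + 1) + τ) =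
      ∑ j ∈ Finset.range k, τ ^ (k - 1 - j) *
        ∑ t ∈ Finset.powersetCard j (Finset.Icc 1 k), ∏ i ∈ t, h i := by
  have hRHS : (∑ j ∈ Finset.range k, τ ^ (k - 1 - j) *
      ∑ t ∈ Finset.powersetCard j (Finset.Icc 1 k), ∏ i ∈ t, h i) = Ssum τ h k := rfl
  rw [hRHS]
  have h2e : h 2 = h 1 + τ := hstep 1 le_rfl (by omega)
  have hsq1 : h 1 ^ 2 + τ * h 1 = 0 := hsq 1 le_rfl (by omega)
  have h12 : h 1 * h 2 = 0 := by
    rw [h2e]; linear_combination hsq1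
  rcases eq_or_lt_of_le hk with hk2 | hk3
  · -- k = 2
    subst hk2
    have : Finset.Icc 1 (2 - 1) = {1} := rfl
    rw [this, Finset.prod_singleton, Ssum]
    rw [Finset.sum_range_succ, Finset.sum_range_succ, Finset.sum_range_zero]
    rw [Esym_zero]
    have hE1 : Esym h 2 1 = h 1 + h 2 := by
      rw [show (2 : ℕ) = 1 + 1 from rfl, Esym_succ, Esym_zero]
      simp [Esym, Finset.powersetCard_one]
    rw [hE1]
    norm_num
    ring
  · -- k ≥ 3
    have hk3 : 3 ≤ k := hk3
    have h3e : h 3 = h 2 + τ := hstep 2 (by omega) (by omega)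
    have hsq2 : h 2 ^ 2 + τ * h 2 = 0 := hsq 2 (by omega) (by omega)
    have hsq2' : (h 1 + τ) ^ 2 + τ * (h 1 + τ) = 0 := by rw [← h2e]; exact hsq2
    -- LHS = 0
    have hLHS : ∏ i ∈ Finset.Icc 1 (k - 1), (h i + h (i + 1) + τ) = 0 := by
      have hIcc : Finset.Icc 1 (k - 1) = insert 1 (insert 2 (Finset.Icc 3 (k - 1))) := by
        ext x
        simp only [Finset.mem_Icc, Finset.mem_insert]
        omega
      have h2not : (2 : ℕ) ∉ Finset.Icc 3 (k - 1) := by simp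
      have h1not : (1 : ℕ) ∉ insert 2 (Finset.Icc 3 (k - 1)) := by
        simp [Finset.mem_Icc]
      rw [hIcc, Finset.prod_insert h1not, Finset.prod_insert h2not, ← mul_assoc]
      have key : (h 1 + h (1 + 1) + τ) * (h 2 + h (2 + 1) + τ) = 0 := by
        have e2 : h (1 + 1) = h 1 + τ := h2e
        have e3 : h (2 + 1) = h 2 + τ := h3e
        rw [e2, e3, h2e]
        linear_combination (4 : R) * hsq2'
      rw [key, zero_mul]
    rw [hLHS]
    -- RHS = 0
    have hS3 : Ssum τ h 3 = 0 := by
      rw [Ssum]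
      rw [Finset.sum_range_succ, Finset.sum_range_succ, Finset.sum_range_succ,
        Finset.sum_range_zero, Esym_zero]
      have hE31 : Esym h 3 1 = h 1 + h 2 + h 3 := by
        rw [show (3 : ℕ) = 2 + 1 from rfl, Esym_succ, Esym_zero,
          show (2 : ℕ) = 1 + 1 from rfl, Esym_succ, Esym_zero]
        simp [Esym, Finset.powersetCard_one]
      have hE32 : Esym h 3 2 = h 1 * h 2 + h 3 * (h 1 + h 2) := by
        rw [show (3 : ℕ) = 2 + 1 from rfl, show (2 : ℕ) = 1 + 1 from rfl, Esym_succ,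
          Esym_succ]
        have hE11 : Esym h 1 1 = h 1 := by
          simp [Esym, Finset.powersetCard_one, show Finset.Icc 1 1 = {1} from rfl]
        have hE12 : Esym h 1 2 = 0 := by
          rw [Esym]
          have : Finset.powersetCard 2 (Finset.Icc 1 1) = ∅ := by
            rw [Finset.powersetCard_eq_empty]
            simp [Nat.card_Icc]
          rw [this, Finset.sum_empty]
        have hE21 := Esym_succ h 1 0
        rw [hE11, Esym_zero, mul_one] at hE21
        norm_num at hE21
        rw [hE11, hE12]
        norm_num
        rw [hE21]
        ring
      rw [hE31, hE32, h3e, h2e]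
      norm_num
      linear_combination (3 : R) * hsq2'
    have hSvanish : ∀ m, 3 ≤ m → Ssum τ h m = 0 := by
      intro m hm
      induction m, hm using Nat.le_induction with
      | base => exact hS3
      | succ n hn ih =>
        rw [Ssum_succ τ h h12 (by omega), ih, mul_zero]
    rw [hSvanish k hk3]
end

section
/- Let R be a commutative ring, τ ∈ R, and h_0, h_1, h_2, ... ∈ R elements satisfying h_i^2 + τ·h_i = 0 and h_{i+1} = h_i + τ for all i ≥ 0. Then for all natural numbers n ≤ m, the element h_0^2 · h_1^2 · ... · h_{n-1}^2 · h_n · h_{n+1} · ... · h_{m-1} equals ∑_{s=0}^{n} (-1)^s · s! · C(n, s) · C(m, s) · τ^s · (h_0 · h_1 · ... · h_{m+n-s-1}). -/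
open Finset

theorem stmt_4 {R : Type*} [CommRing R] (τ : R) (h : ℕ → R)
    (hsq : ∀ i, h i ^ 2 + τ * h i = 0)
    (hstep : ∀ i, h (i + 1) = h i + τ)
    (n m : ℕ) (hnm : n ≤ m) :
    (∏ i ∈ Finset.range n, h i ^ 2) * ∏ i ∈ Finset.Ico n m, h i =
      ∑ s ∈ Finset.range (n + 1),
        (-1 : R) ^ s * (s.factorial * n.choose s * m.choose s : ℕ) * τ ^ s *
          ∏ i ∈ Finset.range (m + n - s), h i := by
  have hval : ∀ i : ℕ, h i = h 0 + (i : R) * τ := by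
    intro i
    induction i with
    | zero => simp
    | succ k ih => rw [hstep, ih]; push_cast; ring
  have hmul : ∀ i k : ℕ, h i * ∏ j ∈ range k, h j =
      (∏ j ∈ range (k + 1), h j) + ((i : R) - (k : R)) * τ * ∏ j ∈ range k, h j := by
    intro i k
    rw [prod_range_succ, hval i, hval k]
    ring
  have key : ∀ N M : ℕ, N ≤ M →
      (∏ i ∈ range N, h i) * ∏ i ∈ range M, h i =
      ∑ s ∈ range (N + 1),
        (-1 : R) ^ s * (s.factorial * N.choose s * M.choose s : ℕ) * τ ^ s *
          ∏ i ∈ range (M + N - s), h i := by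
    intro N
    induction N with
    | zero => intro M _; simp
    | succ N ih =>
      intro M hM
      have hNM : N ≤ M := Nat.le_of_succ_le hM
      -- expand each term after multiplying by h N
      have hexp : ∀ s ∈ range (N + 1),
          h N * ((-1:R)^s * ((s.factorial * N.choose s * M.choose s : ℕ) : R) * τ^s *
              ∏ i ∈ range (M + N - s), h i) =
          (-1:R)^s * ((s.factorial * N.choose s * M.choose s : ℕ) : R) * τ^s *
              ∏ i ∈ range (M + N + 1 - s), h i +
          (-(((M - s : ℕ)) : R) * τ) *
            ((-1:R)^s * ((s.factorial * N.choose s * M.choose s : ℕ) : R) * τ^s *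
              ∏ i ∈ range (M + N - s), h i) := by
        intro s hs
        have hsN : s ≤ N := Nat.lt_succ_iff.mp (mem_range.mp hs)
        have hsM : s ≤ M := hsN.trans hNM
        have e := hmul N (M + N - s)
        have h1 : M + N - s + 1 = M + N + 1 - s := by omega
        rw [h1, Nat.cast_sub (by omega : s ≤ M + N)] at e
        rw [Nat.cast_sub hsM]
        push_cast at e ⊢
        linear_combination ((-1:R)^s * (s.factorial : R) * (N.choose s : R) *
          (M.choose s : R) * τ^s) * e
      -- the coefficient identity
      have coeff : ∀ s ∈ range (N + 1),
          (-1:R)^(s+1) * (((s+1).factorial * (N+1).choose (s+1) * M.choose (s+1) : ℕ) : R) * τ^(s+1) *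
              ∏ i ∈ range (M + (N+1) - (s+1)), h i =
          (-1:R)^(s+1) * (((s+1).factorial * N.choose (s+1) * M.choose (s+1) : ℕ) : R) * τ^(s+1) *
              ∏ i ∈ range (M + N + 1 - (s+1)), h i +
          (-(((M - s : ℕ)) : R) * τ) *
            ((-1:R)^s * ((s.factorial * N.choose s * M.choose s : ℕ) : R) * τ^s *
              ∏ i ∈ range (M + N - s), h i) := by
        intro s hs
        have hsN : s ≤ N := Nat.lt_succ_iff.mp (mem_range.mp hs)
        have hsM : s ≤ M := hsN.trans hNM
        have e1 : (s+1).factorial * (N.choose s) * M.choose (s+1)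
            = (M - s) * (s.factorial * N.choose s * M.choose s) := by
          rw [Nat.factorial_succ]
          calc (s+1) * s.factorial * N.choose s * M.choose (s+1)
              = s.factorial * N.choose s * (M.choose (s+1) * (s+1)) := by ring
            _ = s.factorial * N.choose s * (M.choose s * (M - s)) := by
                rw [Nat.choose_succ_right_eq]
            _ = (M - s) * (s.factorial * N.choose s * M.choose s) := by ring
        have L : (s+1).factorial * (N+1).choose (s+1) * M.choose (s+1)
            = (s+1).factorial * N.choose (s+1) * M.choose (s+1)
              + (M - s) * (s.factorial * N.choose s * M.choose s) := by
          rw [Nat.choose_succ_succ]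
          calc (s+1).factorial * (N.choose s + N.choose (s+1)) * M.choose (s+1)
              = (s+1).factorial * N.choose (s+1) * M.choose (s+1)
                + (s+1).factorial * N.choose s * M.choose (s+1) := by ring
            _ = _ := by rw [e1]
        have h2 : M + (N + 1) - (s + 1) = M + N - s := by omega
        have h3 : M + N + 1 - (s + 1) = M + N - s := by omega
        rw [h2, h3]
        have L' : (((s+1).factorial * (N+1).choose (s+1) * M.choose (s+1) : ℕ) : R)
            = (((s+1).factorial * N.choose (s+1) * M.choose (s+1) : ℕ) : R)
              + ((M - s : ℕ) : R) * ((s.factorial * N.choose s * M.choose s : ℕ) : R) :=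
          by exact_mod_cast congrArg (Nat.cast : ℕ → R) L
        push_cast at L' ⊢
        linear_combination ((-1:R)^(s+1) * τ^(s+1) * ∏ i ∈ range (M + N - s), h i) * L'
      -- put it together
      calc (∏ i ∈ range (N + 1), h i) * ∏ i ∈ range M, h i
          = ∑ s ∈ range (N + 1), h N *
              ((-1:R)^s * ((s.factorial * N.choose s * M.choose s : ℕ) : R) * τ^s *
                ∏ i ∈ range (M + N - s), h i) := by
            rw [prod_range_succ, mul_comm (∏ i ∈ range N, h i) (h N), mul_assoc,
              ih M hNM, mul_sum]
        _ = ∑ s ∈ range (N + 1),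
              ((-1:R)^s * ((s.factorial * N.choose s * M.choose s : ℕ) : R) * τ^s *
                ∏ i ∈ range (M + N + 1 - s), h i) +
            ∑ s ∈ range (N + 1),
              ((-(((M - s : ℕ)) : R) * τ) *
                ((-1:R)^s * ((s.factorial * N.choose s * M.choose s : ℕ) : R) * τ^s *
                  ∏ i ∈ range (M + N - s), h i)) := by
            rw [← sum_add_distrib]
            exact sum_congr rfl hexp
        _ = ∑ s ∈ range (N + 1 + 1),
              (-1:R)^s * ((s.factorial * (N+1).choose s * M.choose s : ℕ) : R) * τ^s *
                ∏ i ∈ range (M + (N+1) - s), h i := by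
            have A : (∑ s ∈ range (N + 1 + 1),
                  (-1:R)^s * ((s.factorial * (N+1).choose s * M.choose s : ℕ) : R) * τ^s *
                    ∏ i ∈ range (M + (N+1) - s), h i)
                = (∑ s ∈ range (N + 1),
                    (-1:R)^(s+1) * (((s+1).factorial * (N+1).choose (s+1) * M.choose (s+1) : ℕ) : R)
                      * τ^(s+1) * ∏ i ∈ range (M + (N+1) - (s+1)), h i)
                  + (-1:R)^0 * ((Nat.factorial 0 * (N+1).choose 0 * M.choose 0 : ℕ) : R) * τ^0 *
                      ∏ i ∈ range (M + (N+1) - 0), h i :=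
              Finset.sum_range_succ' _ (N + 1)
            have Bc : (∑ s ∈ range (N + 1),
                  (-1:R)^(s+1) * (((s+1).factorial * (N+1).choose (s+1) * M.choose (s+1) : ℕ) : R)
                    * τ^(s+1) * ∏ i ∈ range (M + (N+1) - (s+1)), h i)
                = ∑ s ∈ range (N + 1),
                    ((-1:R)^(s+1) * (((s+1).factorial * N.choose (s+1) * M.choose (s+1) : ℕ) : R)
                        * τ^(s+1) * ∏ i ∈ range (M + N + 1 - (s+1)), h i
                      + (-(((M - s : ℕ)) : R) * τ) *
                        ((-1:R)^s * ((s.factorial * N.choose s * M.choose s : ℕ) : R) * τ^s *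
                          ∏ i ∈ range (M + N - s), h i)) :=
              Finset.sum_congr rfl coeff
            have Cs : (∑ s ∈ range (N + 1),
                  ((-1:R)^(s+1) * (((s+1).factorial * N.choose (s+1) * M.choose (s+1) : ℕ) : R)
                      * τ^(s+1) * ∏ i ∈ range (M + N + 1 - (s+1)), h i
                    + (-(((M - s : ℕ)) : R) * τ) *
                      ((-1:R)^s * ((s.factorial * N.choose s * M.choose s : ℕ) : R) * τ^s *
                        ∏ i ∈ range (M + N - s), h i)))
                = (∑ s ∈ range (N + 1),
                    (-1:R)^(s+1) * (((s+1).factorial * N.choose (s+1) * M.choose (s+1) : ℕ) : R)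
                      * τ^(s+1) * ∏ i ∈ range (M + N + 1 - (s+1)), h i)
                  + ∑ s ∈ range (N + 1),
                      ((-(((M - s : ℕ)) : R) * τ) *
                        ((-1:R)^s * ((s.factorial * N.choose s * M.choose s : ℕ) : R) * τ^s *
                          ∏ i ∈ range (M + N - s), h i)) :=
              Finset.sum_add_distrib
            have D : (∑ s ∈ range (N + 1 + 1),
                  (-1:R)^s * ((s.factorial * N.choose s * M.choose s : ℕ) : R) * τ^s *
                    ∏ i ∈ range (M + N + 1 - s), h i)
                = (∑ s ∈ range (N + 1),
                    (-1:R)^(s+1) * (((s+1).factorial * N.choose (s+1) * M.choose (s+1) : ℕ) : R)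
                      * τ^(s+1) * ∏ i ∈ range (M + N + 1 - (s+1)), h i)
                  + (-1:R)^0 * ((Nat.factorial 0 * N.choose 0 * M.choose 0 : ℕ) : R) * τ^0 *
                      ∏ i ∈ range (M + N + 1 - 0), h i :=
              Finset.sum_range_succ' _ (N + 1)
            have E : (∑ s ∈ range (N + 1 + 1),
                  (-1:R)^s * ((s.factorial * N.choose s * M.choose s : ℕ) : R) * τ^s *
                    ∏ i ∈ range (M + N + 1 - s), h i)
                = (∑ s ∈ range (N + 1),
                    (-1:R)^s * ((s.factorial * N.choose s * M.choose s : ℕ) : R) * τ^s *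
                      ∏ i ∈ range (M + N + 1 - s), h i)
                  + (-1:R)^(N+1) * (((N+1).factorial * N.choose (N+1) * M.choose (N+1) : ℕ) : R)
                      * τ^(N+1) * ∏ i ∈ range (M + N + 1 - (N+1)), h i :=
              Finset.sum_range_succ _ (N + 1)
            have F : (-1:R)^(N+1) * (((N+1).factorial * N.choose (N+1) * M.choose (N+1) : ℕ) : R)
                * τ^(N+1) * ∏ i ∈ range (M + N + 1 - (N+1)), h i = 0 := by
              simp [Nat.choose_succ_self]
            have G : (-1:R)^0 * ((Nat.factorial 0 * (N+1).choose 0 * M.choose 0 : ℕ) : R) * τ^0 *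
                  ∏ i ∈ range (M + (N+1) - 0), h i
                = (-1:R)^0 * ((Nat.factorial 0 * N.choose 0 * M.choose 0 : ℕ) : R) * τ^0 *
                  ∏ i ∈ range (M + N + 1 - 0), h i := by
              simp [Nat.add_assoc]
            linear_combination -A - Bc - Cs + D - E - F - G
  -- reduce the statement to `key`
  have hL : (∏ i ∈ range n, h i ^ 2) * ∏ i ∈ Finset.Ico n m, h i
      = (∏ i ∈ range n, h i) * ∏ i ∈ range m, h i := by
    have : ∏ i ∈ range n, h i ^ 2 = (∏ i ∈ range n, h i) * ∏ i ∈ range n, h i := by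
      rw [← prod_mul_distrib]
      exact prod_congr rfl (fun i _ => sq (h i))
    rw [this, mul_assoc, Finset.prod_range_mul_prod_Ico h hnm]
  rw [hL]
  exact key n m hnm
end

section
/- Let R be a commutative ring, τ ∈ R, and h_0, h_1, ... ∈ R satisfying h_i^2 + τ·h_i = 0 and h_{i+1} = h_i + τ for all i. For n ≤ m define a_{n,m} = h_0^2 ⋯ h_{n-1}^2 · h_n ⋯ h_{m-1}. Then for all 1 ≤ n ≤ m one has the recursion a_{n,m} = a_{n-1,m+1} − (m − n + 1) · τ · a_{n-1,m}. -/
theorem stmt_6 {R : Type*} [CommRing R] (τ : R) (h : ℕ → R)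
    (hsq : ∀ i, h i ^ 2 + τ * h i = 0)
    (hstep : ∀ i, h (i + 1) = h i + τ)
    (a : ℕ → ℕ → R)
    (ha : ∀ n m, a n m = (∏ i ∈ Finset.range n, h i ^ 2) * ∏ i ∈ Finset.Ico n m, h i)
    (n m : ℕ) (hn : 1 ≤ n) (hnm : n ≤ m) :
    a n m = a (n - 1) (m + 1) - ((m - n + 1 : ℕ) : R) * τ * a (n - 1) m := by
  obtain ⟨k, rfl⟩ : ∃ k, n = k + 1 := ⟨n - 1, (Nat.succ_pred_eq_of_pos hn).symm⟩
  have hk : k + 1 ≤ m := hnm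
  have hshift : ∀ j, h (k + j) = h k + (j : R) * τ := by
    intro j
    induction j with
    | zero => simp
    | succ j ih => rw [← Nat.add_assoc, hstep, ih]; push_cast; ring
  have hm : h m = h k + ((m - (k + 1) + 1 : ℕ) : R) * τ := by
    have h1 : m = k + (m - k) := by omega
    have h2 : m - (k + 1) + 1 = m - k := by omega
    rw [h2]; conv_lhs => rw [h1, hshift]
  have e1 : a (k + 1) m = a k m * h k := by
    rw [ha, ha, Finset.prod_range_succ,
      Finset.prod_eq_prod_Ico_succ_bot (by omega : k < m) h]
    ring
  have e2 : a k (m + 1) = a k m * h m := by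
    rw [ha, ha, Finset.prod_Ico_succ_top (by omega : k ≤ m)]
    ring
  simp only [Nat.add_sub_cancel]
  rw [e1, e2, hm]
  ring
end
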